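/- Let M be a map with flag set F and generators s0, s1, s2, and let r0, r1, r2 be the truncation generators on F × {0,1,2}. If M is regular (Γ(M) acts transitively on F), then either Tr(M) is regular, or Tr(M) is a 3-orbit map whose three flag orbits are exactly F × {0}, F × {1} and F × {2} (i.e. Tr(M) has symmetry type 3^0). -/
import Mathlib


/-- if M is regular, then Tr(M) is regular, or else Tr(M) is a 3-orbit map
whose three flag orbits are exactly F × {0}, F × {1}, F × {2} (symmetry type 3^0). -/
theorem truncation_of_regular
    {F : Type*} [Fintype F] [Nonempty F]
    (s0 s1 s2 : Equiv.Perm F)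
    (hs0i : s0 * s0 = 1) (hs0f : ∀ x, s0 x ≠ x)
    (hs1i : s1 * s1 = 1) (hs1f : ∀ x, s1 x ≠ x)
    (hs2i : s2 * s2 = 1) (hs2f : ∀ x, s2 x ≠ x)
    (hcomm : s0 * s2 = s2 * s0)
    (hs02i : (s0 * s2) * (s0 * s2) = 1) (hs02f : ∀ x, (s0 * s2) x ≠ x)
    (htrans : ∀ x y : F, ∃ g ∈ Subgroup.closure ({s0, s1, s2} : Set (Equiv.Perm F)), g x = y)
    (r0 r1 r2 : Equiv.Perm (F × Fin 3))
    (hr0 : ∀ Φ : F, r0 (Φ, 0) = (s1 Φ, 0) ∧ r0 (Φ, 1) = (s0 Φ, 1) ∧ r0 (Φ, 2) = (s1 Φ, 2))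
    (hr1 : ∀ Φ : F, r1 (Φ, 0) = (s2 Φ, 0) ∧ r1 (Φ, 1) = (Φ, 2) ∧ r1 (Φ, 2) = (Φ, 1))
    (hr2 : ∀ Φ : F, r2 (Φ, 0) = (Φ, 2) ∧ r2 (Φ, 1) = (s2 Φ, 1) ∧ r2 (Φ, 2) = (Φ, 0))
    (hreg : ∀ x y : F, ∃ γ ∈ Subgroup.centralizer ({s0, s1, s2} : Set (Equiv.Perm F)), γ x = y) :
    (∀ x y : F × Fin 3,
      ∃ γ ∈ Subgroup.centralizer ({r0, r1, r2} : Set (Equiv.Perm (F × Fin 3))), γ x = y) ∨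
    (∀ x : F × Fin 3,
      MulAction.orbit (↥(Subgroup.centralizer ({r0, r1, r2} : Set (Equiv.Perm (F × Fin 3))))) x =
        {p : F × Fin 3 | p.2 = x.2}) := by
  classical
  -- lift of automorphisms of M to automorphisms of Tr(M)
  have lift : ∀ δ ∈ Subgroup.centralizer ({s0, s1, s2} : Set (Equiv.Perm F)),
      ∃ γ ∈ Subgroup.centralizer ({r0, r1, r2} : Set (Equiv.Perm (F × Fin 3))),
        ∀ p : F × Fin 3, γ p = (δ p.1, p.2) := by
    intro δ hδ
    have hδ' := Subgroup.mem_centralizer_iff.mp hδ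
    have h0 : ∀ x, δ (s0 x) = s0 (δ x) := by
      have := hδ' s0 (by simp)
      intro x
      rw [← Equiv.Perm.mul_apply, ← this, Equiv.Perm.mul_apply]
    have h1 : ∀ x, δ (s1 x) = s1 (δ x) := by
      have := hδ' s1 (by simp)
      intro x
      rw [← Equiv.Perm.mul_apply, ← this, Equiv.Perm.mul_apply]
    have h2 : ∀ x, δ (s2 x) = s2 (δ x) := by
      have := hδ' s2 (by simp)
      intro x
      rw [← Equiv.Perm.mul_apply, ← this, Equiv.Perm.mul_apply]
    refine ⟨Equiv.prodCongr δ (Equiv.refl (Fin 3)), ?_, by intro p; rfl⟩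
    refine Subgroup.mem_centralizer_iff.mpr ?_
    intro g hg
    rcases hg with hg | hg | hg <;> subst hg <;>
    · ext ⟨Φ, i⟩ <;> fin_cases i <;>
        simp [Equiv.Perm.mul_apply, (hr0 _).1, (hr0 _).2.1, (hr0 _).2.2,
          (hr1 _).1, (hr1 _).2.1, (hr1 _).2.2,
          (hr2 _).1, (hr2 _).2.1, (hr2 _).2.2, h0, h1, h2]
  -- layer action of generators
  have la1 : ∀ x : F × Fin 3, (r1 x).2 = Equiv.swap 1 2 x.2 := by
    rintro ⟨Φ, i⟩
    fin_cases i <;>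
      simp [(hr1 Φ).1, (hr1 Φ).2.1, (hr1 Φ).2.2] <;> decide
  have la2 : ∀ x : F × Fin 3, (r2 x).2 = Equiv.swap 0 2 x.2 := by
    rintro ⟨Φ, i⟩
    fin_cases i <;>
      simp [(hr2 Φ).1, (hr2 Φ).2.1, (hr2 Φ).2.2] <;> decide
  -- realization of every permutation of layers
  have realize : ∀ σ : Equiv.Perm (Fin 3),
      ∃ g ∈ Subgroup.closure ({r0, r1, r2} : Set (Equiv.Perm (F × Fin 3))),
        ∀ x : F × Fin 3, (g x).2 = σ x.2 := by
    have m1 : r1 ∈ Subgroup.closure ({r0, r1, r2} : Set (Equiv.Perm (F × Fin 3))) :=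
      Subgroup.subset_closure (by simp)
    have m2 : r2 ∈ Subgroup.closure ({r0, r1, r2} : Set (Equiv.Perm (F × Fin 3))) :=
      Subgroup.subset_closure (by simp)
    have enum : ∀ σ : Equiv.Perm (Fin 3),
        σ = 1 ∨ σ = Equiv.swap 1 2 ∨ σ = Equiv.swap 0 2 ∨
        σ = Equiv.swap 1 2 * Equiv.swap 0 2 ∨ σ = Equiv.swap 0 2 * Equiv.swap 1 2 ∨
        σ = Equiv.swap 1 2 * Equiv.swap 0 2 * Equiv.swap 1 2 := by decide
    intro σ
    rcases enum σ with h | h | h | h | h | h <;> subst h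
    · exact ⟨1, Subgroup.one_mem _, by intro x; rfl⟩
    · exact ⟨r1, m1, la1⟩
    · exact ⟨r2, m2, la2⟩
    · exact ⟨r1 * r2, Subgroup.mul_mem _ m1 m2, by
        intro x; simp [Equiv.Perm.mul_apply, la1, la2]⟩
    · exact ⟨r2 * r1, Subgroup.mul_mem _ m2 m1, by
        intro x; simp [Equiv.Perm.mul_apply, la1, la2]⟩
    · exact ⟨r1 * r2 * r1, Subgroup.mul_mem _ (Subgroup.mul_mem _ m1 m2) m1, by
        intro x; simp [Equiv.Perm.mul_apply, la1, la2]⟩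
  -- elements of the monodromy group commute with automorphisms
  have commAll : ∀ γ ∈ Subgroup.centralizer ({r0, r1, r2} : Set (Equiv.Perm (F × Fin 3))),
      ∀ g ∈ Subgroup.closure ({r0, r1, r2} : Set (Equiv.Perm (F × Fin 3))),
        g * γ = γ * g := by
    intro γ hγ
    have hγ' := Subgroup.mem_centralizer_iff.mp hγ
    intro g hg
    induction hg using Subgroup.closure_induction with
    | mem h hh => exact hγ' h hh
    | one => simp
    | mul u v _ _ hu hv => rw [mul_assoc, hv, ← mul_assoc, hu, mul_assoc]
    | inv u _ hu => exact (Commute.inv_left hu : Commute u⁻¹ γ)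
  by_cases hpres : ∀ γ ∈ Subgroup.centralizer ({r0, r1, r2} : Set (Equiv.Perm (F × Fin 3))),
      ∀ x : F × Fin 3, (γ x).2 = x.2
  · -- every automorphism preserves layers : three orbits
    right
    intro x
    ext p
    constructor
    · rintro ⟨γ, rfl⟩
      exact hpres γ.1 γ.2 x
    · intro hp
      obtain ⟨δ, hδ, hδx⟩ := hreg x.1 p.1
      obtain ⟨γ, hγ, hγdef⟩ := lift δ hδ
      refine ⟨⟨γ, hγ⟩, ?_⟩
      show γ x = p
      rw [hγdef]
      exact Prod.ext hδx (by simpa using hp.symm)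
  · -- some automorphism mixes layers : Tr(M) is regular
    left
    push_neg at hpres
    obtain ⟨γ0, hγ0, x0, hx0⟩ := hpres
    intro x y
    by_cases hxy : x.2 = y.2
    · obtain ⟨δ, hδ, hδx⟩ := hreg x.1 y.1
      obtain ⟨γ, hγ, hγdef⟩ := lift δ hδ
      exact ⟨γ, hγ, by rw [hγdef]; exact Prod.ext hδx hxy⟩
    · have pairs : ∀ i j c d : Fin 3, i ≠ j → c ≠ d →
          ∃ σ : Equiv.Perm (Fin 3), σ i = c ∧ σ j = d := by decide
      obtain ⟨σ, hσ1, hσ2⟩ := pairs x0.2 (γ0 x0).2 x.2 y.2 (fun h => hx0 h.symm) hxy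
      obtain ⟨g, hg, hgl⟩ := realize σ
      set z := g x0 with hz
      have hz2 : z.2 = x.2 := by rw [hz, hgl, hσ1]
      have hγ0z : (γ0 z).2 = y.2 := by
        have : γ0 z = g (γ0 x0) := by
          have := commAll γ0 hγ0 g hg
          rw [hz, ← Equiv.Perm.mul_apply, ← this, Equiv.Perm.mul_apply]
        rw [this, hgl, hσ2]
      obtain ⟨δ1, hδ1, hδ1x⟩ := hreg x.1 z.1
      obtain ⟨α, hα, hαdef⟩ := lift δ1 hδ1
      obtain ⟨δ2, hδ2, hδ2x⟩ := hreg (γ0 z).1 y.1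
      obtain ⟨β, hβ, hβdef⟩ := lift δ2 hδ2
      refine ⟨β * γ0 * α, Subgroup.mul_mem _ (Subgroup.mul_mem _ hβ hγ0) hα, ?_⟩
      have hαx : α x = z := by rw [hαdef]; exact Prod.ext hδ1x hz2.symm
      have : (β * γ0 * α) x = β (γ0 z) := by
        simp [Equiv.Perm.mul_apply, hαx]
      rw [this, hβdef]
      exact Prod.ext hδ2x hγ0z
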